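/- Let W : F_q → Y be a discrete memoryless channel with uniformly distributed input, and define the combined channels W'(y_1,y_2 | v_1) = (1/q) Σ_{v_2 ∈ F_q} W(y_1 | v_1 + α v_2) W(y_2 | v_2) and W''(y_1,y_2,v_1 | v_2) = (1/q) W(y_1 | v_1 + α v_2) W(y_2 | v_2), where α ∈ F_q^*. Then the symmetric capacities satisfy I(W') + I(W'') = 2 I(W). -/

import Mathlib

noncomputable section

open Classical in
/-- Probability of an event under the (finitely supported) weight function `p`. -/
def probOf {Ω : Type*} [Fintype Ω] (p : Ω → ℝ) (E : Ω → Prop) : ℝ :=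
  ∑ ω, if E ω then p ω else 0

/-- Shannon entropy of the random variable `X` on the finite probability space `(Ω, p)`. -/
def entropy {Ω A : Type*} [Fintype Ω] [Fintype A] (p : Ω → ℝ) (X : Ω → A) : ℝ :=
  -∑ a : A, probOf p (fun ω => X ω = a) * Real.log (probOf p (fun ω => X ω = a))

/-- Mutual information `I(X;Y)` on the finite probability space `(Ω, p)`. -/
def mutInfo {Ω A B : Type*} [Fintype Ω] [Fintype A] [Fintype B]
    (p : Ω → ℝ) (X : Ω → A) (Y : Ω → B) : ℝ :=
  entropy p X + entropy p Y - entropy p fun ω => (X ω, Y ω)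

/-- Conditional mutual information `I(X;Y∣Z)` on the finite probability space `(Ω, p)`. -/
def condMutInfo {Ω A B C : Type*} [Fintype Ω] [Fintype A] [Fintype B] [Fintype C]
    (p : Ω → ℝ) (X : Ω → A) (Y : Ω → B) (Z : Ω → C) : ℝ :=
  (entropy p fun ω => (X ω, Z ω)) + (entropy p fun ω => (Y ω, Z ω))
    - (entropy p fun ω => (X ω, Y ω, Z ω)) - entropy p Z

/-- The symmetric capacity `I(W)` of a channel `W : F → Y → ℝ` with uniform input:
the mutual information between input and output on `F × Y` with joint weight
`(1/|F|) W(y|v)`. -/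
def chanMI {F Y : Type*} [Fintype F] [Fintype Y] (W : F → Y → ℝ) : ℝ :=
  mutInfo (fun vy : F × Y => (1 / (Fintype.card F : ℝ)) * W vy.1 vy.2) Prod.fst Prod.snd
private def negH {A : Type*} [Fintype A] (d : A → ℝ) : ℝ :=
  -∑ a, d a * Real.log (d a)

private lemma entropy_eq {Ω A : Type*} [Fintype Ω] [Fintype A] (p : Ω → ℝ) (X : Ω → A) :
    entropy p X = negH (fun a => probOf p (fun ω => X ω = a)) := rfl

private lemma negH_congr {A : Type*} [Fintype A] {d d' : A → ℝ} (h : ∀ a, d a = d' a) :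
    negH d = negH d' := by
  unfold negH; rw [funext h]

private lemma negH_comp {A B : Type*} [Fintype A] [Fintype B] (d : B → ℝ) (e : A ≃ B) :
    negH (fun a => d (e a)) = negH d := by
  unfold negH
  exact congrArg Neg.neg (Equiv.sum_comp e fun b => d b * Real.log (d b))

private lemma negH_prod {A B : Type*} [Fintype A] [Fintype B] (d1 : A → ℝ) (d2 : B → ℝ)
    (h1 : ∑ a, d1 a = 1) (h2 : ∑ b, d2 b = 1) :
    negH (fun ab : A × B => d1 ab.1 * d2 ab.2) = negH d1 + negH d2 := by
  unfold negH
  rw [Fintype.sum_prod_type]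
  have key : ∀ a b, d1 a * d2 b * Real.log (d1 a * d2 b)
      = (d1 a * Real.log (d1 a)) * d2 b + d1 a * (d2 b * Real.log (d2 b)) := by
    intro a b
    by_cases ha : d1 a = 0
    · simp [ha]
    by_cases hb : d2 b = 0
    · simp [hb]
    rw [Real.log_mul ha hb]; ring
  simp_rw [key]
  have inner : ∀ a, ∑ b, ((d1 a * Real.log (d1 a)) * d2 b + d1 a * (d2 b * Real.log (d2 b)))
      = d1 a * Real.log (d1 a) + d1 a * ∑ b, d2 b * Real.log (d2 b) := by
    intro a
    rw [Finset.sum_add_distrib, ← Finset.mul_sum, ← Finset.mul_sum, h2, mul_one]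
  simp_rw [inner]
  rw [Finset.sum_add_distrib, ← Finset.sum_mul, h1, one_mul]
  ring

private lemma negH_const {A : Type*} [Fintype A] [Nonempty A] :
    negH (fun _ : A => 1 / (Fintype.card A : ℝ)) = Real.log (Fintype.card A) := by
  have hq : ((Fintype.card A : ℝ)) ≠ 0 := Nat.cast_ne_zero.mpr Fintype.card_ne_zero
  unfold negH
  rw [Finset.sum_const, Finset.card_univ, nsmul_eq_mul, one_div, Real.log_inv]
  field_simp

private lemma probOf_congr {Ω : Type*} [Fintype Ω] (p : Ω → ℝ) {E E' : Ω → Prop}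
    (h : ∀ ω, E ω ↔ E' ω) : probOf p E = probOf p E' := by
  classical
  unfold probOf
  exact Finset.sum_congr rfl fun ω _ => by simp only [h ω]

private lemma probOf_equiv {Ω Ω' : Type*} [Fintype Ω] [Fintype Ω'] (e : Ω' ≃ Ω)
    (p : Ω → ℝ) (E : Ω → Prop) :
    probOf p E = probOf (fun ω' => p (e ω')) (fun ω' => E (e ω')) := by
  classical
  unfold probOf
  rw [← Equiv.sum_comp e (fun ω => if E ω then p ω else 0)]

private lemma probOf_id {Ω : Type*} [Fintype Ω] (p : Ω → ℝ) (a : Ω) :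
    probOf p (fun ω => ω = a) = p a := by
  classical
  unfold probOf
  simp

private lemma probOf_proj {A B : Type*} [Fintype A] [Fintype B] (p : A × B → ℝ) (a : A) :
    probOf p (fun z => z.1 = a) = ∑ b, p (a, b) := by
  classical
  unfold probOf
  rw [Fintype.sum_prod_type]
  rw [Finset.sum_eq_single a (fun b _ hb => by simp [hb]) (by simp)]
  simp

private lemma probOf_eq_sum {Ω A B : Type*} [Fintype Ω] [Fintype A] [Fintype B]
    (p : Ω → ℝ) (X : Ω → A) (e : A × B ≃ Ω) (hX : ∀ ab : A × B, X (e ab) = ab.1) (a : A) :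
    probOf p (fun ω => X ω = a) = ∑ b, p (e (a, b)) := by
  rw [probOf_equiv e]
  rw [probOf_congr _ (fun ab => by rw [hX])]
  exact probOf_proj _ a

private lemma probOf_eq_self {Ω A : Type*} [Fintype Ω] [Fintype A]
    (p : Ω → ℝ) (X : Ω → A) (e : A ≃ Ω) (hX : ∀ a, X (e a) = a) (a : A) :
    probOf p (fun ω => X ω = a) = p (e a) := by
  rw [probOf_equiv e]
  rw [probOf_congr _ (fun b => by rw [hX])]
  exact probOf_id _ a

private def eB {A B C : Type*} : B × A × C ≃ A × B × C :=
  ⟨fun x => (x.2.1, x.1, x.2.2), fun x => (x.2.1, x.1, x.2.2), fun _ => rfl, fun _ => rfl⟩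

private def eC {A B C D : Type*} : (C × D) × A × B ≃ A × B × C × D :=
  ⟨fun x => (x.2.1, x.2.2, x.1.1, x.1.2), fun z => ((z.2.2.1, z.2.2.2), z.1, z.2.1),
   fun _ => rfl, fun _ => rfl⟩

private def eD {A B C D : Type*} : (A × C × D) × B ≃ A × B × C × D :=
  ⟨fun x => (x.1.1, x.2, x.1.2.1, x.1.2.2), fun z => ((z.1, z.2.2.1, z.2.2.2), z.2.1),
   fun _ => rfl, fun _ => rfl⟩

private def eD' {A B C D : Type*} : (C × D × A) × B ≃ A × B × C × D :=
  ⟨fun x => (x.1.2.2, x.2, x.1.1, x.1.2.1), fun z => ((z.2.2.1, z.2.2.2, z.1), z.2.1),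
   fun _ => rfl, fun _ => rfl⟩

private def eE {A B C D : Type*} : B × C × D × A ≃ A × B × C × D :=
  ⟨fun x => (x.2.2.2, x.1, x.2.1, x.2.2.1), fun z => (z.2.1, z.2.2.1, z.2.2.2, z.1),
   fun _ => rfl, fun _ => rfl⟩

private def eR {A C D : Type*} : C × D × A ≃ A × C × D :=
  ⟨fun x => (x.2.2, x.1, x.2.1), fun t => (t.2.1, t.2.2, t.1), fun _ => rfl, fun _ => rfl⟩

private def ePP {F Y : Type*} [Field F] (α : F) : F × Y × Y × F ≃ (F × Y) × F × Y :=
  ⟨fun x => ((x.2.2.2 + α * x.1, x.2.1), (x.1, x.2.2.1)),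
   fun u => (u.2.1, u.1.2, u.2.2, u.1.1 - α * u.2.1),
   by rintro ⟨a, b, c, d⟩; simp,
   by rintro ⟨⟨a, b⟩, c, d⟩; simp⟩


private theorem key {F Y : Type} [Field F] [Fintype F] [Fintype Y]
    (W : F → Y → ℝ) (hW1 : ∀ c, ∑ y, W c y = 1) (α : F) :
    mutInfo (fun z : F × F × Y × Y =>
        (1 / (Fintype.card F : ℝ)) * (1 / (Fintype.card F : ℝ)) *
          W (z.1 + α * z.2.1) z.2.2.1 * W z.2.1 z.2.2.2)
      (fun z => z.1) (fun z => (z.2.2.1, z.2.2.2)) +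
    mutInfo (fun z : F × F × Y × Y =>
        (1 / (Fintype.card F : ℝ)) * (1 / (Fintype.card F : ℝ)) *
          W (z.1 + α * z.2.1) z.2.2.1 * W z.2.1 z.2.2.2)
      (fun z => z.2.1) (fun z => (z.2.2.1, z.2.2.2, z.1)) = 2 * chanMI W := by
  classical
  have hne : Nonempty F := ⟨0⟩
  set q : ℝ := (Fintype.card F : ℝ) with hq
  have hqne : q ≠ 0 := Nat.cast_ne_zero.mpr Fintype.card_ne_zero
  set p : F × F × Y × Y → ℝ :=
    fun z => 1 / q * (1 / q) * W (z.1 + α * z.2.1) z.2.2.1 * W z.2.1 z.2.2.2 with hp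
  set g : Y → ℝ := fun y => ∑ c, 1 / q * W c y with hg
  set P : F × Y → ℝ := fun cy => 1 / q * W cy.1 cy.2 with hP
  set r : F × Y × Y → ℝ := fun t => ∑ v2, p (t.1, v2, t.2.1, t.2.2) with hr
  -- basic sums
  have hFsum : ∑ _v : F, 1 / q = 1 := by
    rw [Finset.sum_const, Finset.card_univ, nsmul_eq_mul]; field_simp; rfl
  have hconst : ∑ _v : F, 1 / q * (1 / q) = 1 / q := by
    rw [Finset.sum_const, Finset.card_univ, nsmul_eq_mul]; field_simp; rfl
  have hrowW : ∀ c : F, ∑ y, 1 / q * W c y = 1 / q := by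
    intro c; rw [← Finset.mul_sum, hW1, mul_one]
  have hgsum : ∑ y, g y = 1 := by
    simp only [hg]
    rw [Finset.sum_comm]
    rw [Finset.sum_congr rfl fun c _ => hrowW c]
    exact hFsum
  have hPsum : ∑ cy : F × Y, P cy = 1 := by
    simp only [hP]
    rw [Fintype.sum_prod_type]
    rw [Finset.sum_congr rfl fun c _ => hrowW c]
    exact hFsum
  have hshift : ∀ (c : F) (y : Y), ∑ v1 : F, 1 / q * W (v1 + c) y = ∑ u : F, 1 / q * W u y :=
    fun c y => Equiv.sum_comp (Equiv.addRight c) (fun u => 1 / q * W u y)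
  have hrow : ∀ v1 v2 : F, ∑ yz : Y × Y, p (v1, v2, yz) = 1 / q * (1 / q) := by
    intro v1 v2
    rw [Fintype.sum_prod_type]
    simp only [hp]
    have inner2 : ∀ y1, ∑ y2, 1 / q * (1 / q) * W (v1 + α * v2) y1 * W v2 y2
        = 1 / q * (1 / q) * W (v1 + α * v2) y1 := by
      intro y1; rw [← Finset.mul_sum, hW1, mul_one]
    rw [Finset.sum_congr rfl fun y1 _ => inner2 y1, ← Finset.mul_sum, hW1, mul_one]
  -- marginals
  have hA : ∀ v : F, probOf p (fun z => z.1 = v) = 1 / q := by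
    intro v
    rw [probOf_eq_sum p _ (Equiv.refl _) (fun _ => rfl) v]
    simp only [Equiv.refl_apply]
    rw [Fintype.sum_prod_type]
    rw [Finset.sum_congr rfl fun v2 _ => hrow v v2]
    exact hconst
  have hB : ∀ v : F, probOf p (fun z => z.2.1 = v) = 1 / q := by
    intro v
    rw [probOf_eq_sum p _ eB (fun _ => rfl) v]
    show (∑ b : F × Y × Y, p (b.1, v, b.2)) = 1 / q
    rw [Fintype.sum_prod_type]
    rw [Finset.sum_congr rfl fun v1 _ => hrow v1 v]
    exact hconst
  have hC : ∀ yy : Y × Y, probOf p (fun z => (z.2.2.1, z.2.2.2) = yy) = g yy.1 * g yy.2 := by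
    intro yy
    rw [probOf_eq_sum p _ eC (fun _ => rfl) yy]
    show (∑ b : F × F, p (b.1, b.2, yy.1, yy.2)) = g yy.1 * g yy.2
    rw [Fintype.sum_prod_type, Finset.sum_comm]
    have step : ∀ v2 : F, ∑ v1 : F, p (v1, v2, yy.1, yy.2)
        = g yy.1 * (1 / q * W v2 yy.2) := by
      intro v2
      calc ∑ v1 : F, p (v1, v2, yy.1, yy.2)
          = ∑ v1 : F, (1 / q * W (v1 + α * v2) yy.1) * (1 / q * W v2 yy.2) :=
            Finset.sum_congr rfl fun v1 _ => by simp only [hp]; ring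
        _ = (∑ v1 : F, 1 / q * W (v1 + α * v2) yy.1) * (1 / q * W v2 yy.2) :=
            (Finset.sum_mul _ _ _).symm
        _ = (∑ u : F, 1 / q * W u yy.1) * (1 / q * W v2 yy.2) := by rw [hshift]
        _ = g yy.1 * (1 / q * W v2 yy.2) := by simp only [hg]
    rw [Finset.sum_congr rfl fun v2 _ => step v2, ← Finset.mul_sum]
  have hD : ∀ a : F × Y × Y, probOf p (fun z => ((z.1, z.2.2.1, z.2.2.2) : F × Y × Y) = a)
      = r a := by
    intro a
    rw [probOf_eq_sum p _ eD (fun _ => rfl) a]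
    show (∑ v2 : F, p (a.1, v2, a.2.1, a.2.2)) = r a
    simp only [hr]
  have hD' : ∀ a : Y × Y × F, probOf p (fun z => ((z.2.2.1, z.2.2.2, z.1) : Y × Y × F) = a)
      = r (eR a) := by
    intro a
    rw [probOf_eq_sum p _ eD' (fun _ => rfl) a]
    show (∑ v2 : F, p (a.2.2, v2, a.1, a.2.1)) = r (eR a)
    simp only [hr, eR, Equiv.coe_fn_mk]
  have hE : ∀ a : F × Y × Y × F,
      probOf p (fun z => ((z.2.1, z.2.2.1, z.2.2.2, z.1) : F × Y × Y × F) = a)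
      = (fun u : (F × Y) × F × Y => P u.1 * P u.2) (ePP α a) := by
    intro a
    rw [probOf_eq_self p _ eE (fun _ => rfl) a]
    show p (a.2.2.2, a.1, a.2.1, a.2.2.1) = _
    simp only [hp, hP, ePP, Equiv.coe_fn_mk]
    ring
  -- entropies
  have hE1 : entropy p (fun z : F × F × Y × Y => z.1) = Real.log (Fintype.card F) := by
    rw [entropy_eq, negH_congr (d' := fun _ : F => 1 / q) (fun v => hA v), hq]
    exact negH_const
  have hE4 : entropy p (fun z : F × F × Y × Y => z.2.1) = Real.log (Fintype.card F) := by
    rw [entropy_eq, negH_congr (d' := fun _ : F => 1 / q) (fun v => hB v), hq]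
    exact negH_const
  have hE2 : entropy p (fun z : F × F × Y × Y => (z.2.2.1, z.2.2.2)) = negH g + negH g := by
    rw [entropy_eq, negH_congr (d' := fun yy : Y × Y => g yy.1 * g yy.2) (fun yy => hC yy)]
    exact negH_prod g g hgsum hgsum
  have hE3 : entropy p (fun z : F × F × Y × Y => ((z.1, z.2.2.1, z.2.2.2) : F × Y × Y))
      = negH r := by
    rw [entropy_eq, negH_congr (d' := r) (fun a => hD a)]
  have hE5 : entropy p (fun z : F × F × Y × Y => ((z.2.2.1, z.2.2.2, z.1) : Y × Y × F))
      = negH r := by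
    rw [entropy_eq, negH_congr (d' := fun a : Y × Y × F => r (eR a)) (fun a => hD' a)]
    exact negH_comp r eR
  have hE6 : entropy p
      (fun z : F × F × Y × Y => ((z.2.1, z.2.2.1, z.2.2.2, z.1) : F × Y × Y × F))
      = negH P + negH P := by
    rw [entropy_eq, negH_congr
      (d' := fun a : F × Y × Y × F => (fun u : (F × Y) × F × Y => P u.1 * P u.2) (ePP α a))
      (fun a => hE a)]
    rw [negH_comp (fun u : (F × Y) × F × Y => P u.1 * P u.2) (ePP α)]
    exact negH_prod P P hPsum hPsum
  -- channel capacity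
  have hchanA : ∀ c : F, probOf P (fun z : F × Y => z.1 = c) = 1 / q := by
    intro c
    rw [probOf_eq_sum P _ (Equiv.refl _) (fun _ => rfl) c]
    simp only [Equiv.refl_apply, hP]
    rw [← Finset.mul_sum, hW1, mul_one]
  have hchanB : ∀ y : Y, probOf P (fun z : F × Y => z.2 = y) = g y := by
    intro y
    rw [probOf_eq_sum P _ (Equiv.prodComm Y F) (fun _ => rfl) y]
    simp only [Equiv.prodComm_apply, Prod.swap_prod_mk]
    rfl
  have hchanC : ∀ a : F × Y, probOf P (fun z : F × Y => ((z.1, z.2) : F × Y) = a) = P a := by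
    intro a
    rw [probOf_eq_self P _ (Equiv.refl _) (fun _ => rfl) a]
    simp
  have hchan : chanMI W = Real.log (Fintype.card F) + negH g - negH P := by
    unfold chanMI mutInfo
    rw [entropy_eq, negH_congr (d' := fun _ : F => 1 / q) (fun c => hchanA c), hq]
    rw [entropy_eq, negH_congr (d' := g) (fun y => hchanB y)]
    rw [entropy_eq, negH_congr (d' := P) (fun a => hchanC a)]
    rw [negH_const]
  -- assemble
  unfold mutInfo
  rw [hE1, hE2, hE3, hE4, hE5, hE6, hchan]
  ring

/-- For the single-step `q`-ary polarization transform with inputs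
`C₁ = V₁ + α V₂`, `C₂ = V₂` (`V₁, V₂` independent uniform on `F_q`, `α ≠ 0`) through two
independent copies of the channel `W`, the split-channel symmetric capacities satisfy
`I(W') + I(W'') = 2 I(W)`, where `I(W') = I(V₁; Y₁Y₂)` and `I(W'') = I(V₂; Y₁Y₂V₁)`. -/
theorem stmt6 {F Y : Type} [Field F] [Fintype F] [Fintype Y]
    (W : F → Y → ℝ) (hW0 : ∀ c y, 0 ≤ W c y) (hW1 : ∀ c, ∑ y, W c y = 1)
    (α : F) (hα : α ≠ 0) :
    letI q : ℝ := (Fintype.card F : ℝ)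
    letI p : F × F × Y × Y → ℝ :=
      fun z => (1 / q) * (1 / q) * W (z.1 + α * z.2.1) z.2.2.1 * W z.2.1 z.2.2.2
    mutInfo p (fun z => z.1) (fun z => (z.2.2.1, z.2.2.2)) +
      mutInfo p (fun z => z.2.1) (fun z => (z.2.2.1, z.2.2.2, z.1)) =
    2 * chanMI W := by
  exact key W hW1 α
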